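/- Let A be an s×s real matrix with Jordan decomposition A = S⁻¹ diag(Λ, 0) S where Λ collects the Jordan blocks for nonzero eigenvalues (so every zero eigenvalue of A is semisimple/regular), let Ω = A^D be the Drazin inverse of A, and let b ∈ ℝ^s lie in the row space of A, so bᵀ = vᵀA for some v. Then for |z| sufficiently large, z·bᵀ(I − zA)⁻¹ = −bᵀ Σ_{ℓ≥0} z^{−ℓ} Ω^{ℓ+1}. -/

import Mathlib

open Matrix

attribute [local instance] Matrix.linftyOpNormedRing
attribute [local instance] Matrix.linftyOpNormSMulClass

private lemma vecMul_smul_right {s : ℕ} (c : ℝ) (v : Fin s → ℝ)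
    (M : Matrix (Fin s) (Fin s) ℝ) : v ᵥ* (c • M) = c • (v ᵥ* M) := by
  ext j; simp [vecMul, dotProduct, Finset.mul_sum, mul_left_comm]

/-- If `Ω` is the (index-1) Drazin inverse of `A` (so every zero eigenvalue of
`A` is semisimple) and `bᵀ = vᵀA`, then for `|z|` sufficiently large,
`z·bᵀ(I − zA)⁻¹ = −bᵀ Σ_{ℓ≥0} z^{−ℓ} Ω^{ℓ+1}`. -/
theorem resolvent_laurent_drazin
    (s : ℕ) (A Ω : Matrix (Fin s) (Fin s) ℝ) (b v : Fin s → ℝ)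
    (hDrazin1 : A * Ω * A = A) (hDrazin2 : Ω * A * Ω = Ω) (hDrazin3 : A * Ω = Ω * A)
    (hb : b = v ᵥ* A) :
    ∃ R : ℝ, 0 < R ∧ ∀ z : ℝ, R < |z| →
      HasSum (fun ℓ : ℕ => (z⁻¹) ^ ℓ • (b ᵥ* Ω ^ (ℓ + 1)))
        (-(z • (b ᵥ* (1 - z • A)⁻¹))) := by
  refine ⟨‖Ω‖ + 1, by positivity, fun z hz => ?_⟩
  have hΩz : ‖Ω‖ < |z| := lt_trans (lt_add_one _) hz
  have hzpos : (0 : ℝ) < |z| := lt_of_le_of_lt (by positivity) hz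
  have hz0 : z ≠ 0 := fun h => by simp [h] at hzpos
  set X : Matrix (Fin s) (Fin s) ℝ := z⁻¹ • Ω with hXdef
  have hX : ‖X‖ < 1 := by
    rw [hXdef, norm_smul, Real.norm_eq_abs, abs_inv, ← div_eq_inv_mul]
    exact (div_lt_one hzpos).mpr hΩz
  set G : Matrix (Fin s) (Fin s) ℝ := ∑' n : ℕ, X ^ n with hGdef
  haveI : HasSummableGeomSeries (Matrix (Fin s) (Fin s) ℝ) :=
    @instHasSummableGeomSeriesOfCompleteSpace _ _
      (by exact (inferInstance : CompleteSpace (Matrix (Fin s) (Fin s) ℝ)))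
  have hG : HasSum (fun n : ℕ => X ^ n) G := (summable_geometric_of_norm_lt_one hX).hasSum
  -- commutation facts
  have hAΩ : Commute A Ω := hDrazin3
  have hAX : Commute A X := hAΩ.smul_right z⁻¹
  have hAG : A * G = G * A := by
    have h1 : HasSum (fun n : ℕ => A * X ^ n) (A * G) := hG.mul_left A
    have h2 : HasSum (fun n : ℕ => X ^ n * A) (G * A) := hG.mul_right A
    have : (fun n : ℕ => A * X ^ n) = fun n : ℕ => X ^ n * A := by
      funext n; exact (hAX.pow_right n).eq
    exact (this ▸ h1).unique h2
  have hP2 : (Ω * A) * (Ω * A) = Ω * A := by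
    rw [← mul_assoc, hDrazin2]
  have hAP : A * (Ω * A) = A := by rw [← mul_assoc, hDrazin1]
  have hΩP : Ω * (Ω * A) = Ω := by
    rw [← hDrazin3, ← mul_assoc, hDrazin2]
  have hXP : X * (Ω * A) = X := by rw [hXdef, smul_mul_assoc, hΩP]
  have hGrec : G = 1 + G * X := by
    have h1 : G * (1 - X) = 1 := geom_series_mul_neg X hX
    rw [mul_sub, mul_one] at h1
    exact eq_add_of_sub_eq h1
  have hGP : G * (Ω * A) = Ω * A + G * X := by
    conv_lhs => rw [hGrec]
    rw [add_mul, one_mul, mul_assoc, hXP]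
  -- the explicit inverse
  set N : Matrix (Fin s) (Fin s) ℝ := (1 - Ω * A) - z⁻¹ • (G * Ω) with hNdef
  have hE1 : (1 - z • A) * (1 - Ω * A) = 1 - Ω * A := by
    rw [sub_mul, one_mul, mul_sub, mul_one, smul_mul_assoc, hAP]
    abel
  have hE2 : (1 - z • A) * (G * Ω) = G * Ω - z • (G * (Ω * A)) := by
    rw [sub_mul, one_mul, smul_mul_assoc, ← mul_assoc, hAG, mul_assoc, hDrazin3]
  have hGX : G * X = z⁻¹ • (G * Ω) := by rw [hXdef, mul_smul_comm]
  have hN : (1 - z • A) * N = 1 := by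
    rw [hNdef, mul_sub, mul_smul_comm, hE1, hE2, smul_sub, smul_smul,
      inv_mul_cancel₀ hz0, one_smul, hGP, hGX]
    abel
  have hInv : (1 - z • A)⁻¹ = N := inv_eq_right_inv hN
  -- b is fixed by P
  have hbP : b ᵥ* (Ω * A) = b := by
    rw [hb, vecMul_vecMul, hAP]
  -- the value of the sum
  have hval : -(z • (b ᵥ* (1 - z • A)⁻¹)) = b ᵥ* (G * Ω) := by
    rw [hInv, hNdef, vecMul_sub, vecMul_sub, vecMul_one, hbP, sub_self,
      vecMul_smul_right, zero_sub, smul_neg, neg_neg, smul_smul,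
      mul_inv_cancel₀ hz0, one_smul]
  rw [hval]
  -- map the geometric series through the linear map `M ↦ b ᵥ* M`
  have hGΩ : HasSum (fun n : ℕ => X ^ n * Ω) (G * Ω) := hG.mul_right Ω
  let L : Matrix (Fin s) (Fin s) ℝ →ₗ[ℝ] (Fin s → ℝ) :=
    { toFun := fun M => b ᵥ* M
      map_add' := fun M M' => vecMul_add M M' b
      map_smul' := fun c M => vecMul_smul_right c b M }
  have hmap : HasSum (fun n : ℕ => L (X ^ n * Ω)) (L (G * Ω)) :=
    hGΩ.map L L.continuous_of_finiteDimensional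
  have hfun : (fun n : ℕ => L (X ^ n * Ω))
      = fun ℓ : ℕ => (z⁻¹) ^ ℓ • (b ᵥ* Ω ^ (ℓ + 1)) := by
    funext n
    show b ᵥ* (X ^ n * Ω) = (z⁻¹) ^ n • (b ᵥ* Ω ^ (n + 1))
    rw [hXdef, smul_pow, smul_mul_assoc, ← pow_succ, vecMul_smul_right]
  rw [hfun] at hmap
  exact hmap
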